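/- Every locally compact abelian group A that is an extension of a finitely generated (discrete) abelian group by a finitely generated ℤ_p-module with its p-adic topology is a locally compact abelian group of finite ranks: Hom(ℝ, A) and Hom(A, ℝ) are finite-dimensional real vector spaces, and multiplication by every prime ℓ on A is a strict morphism with finite kernel and finite cokernel. -/

import Mathlib

/-!
STATEMENT 19: Every locally compact abelian group `A` that is an extension of
a finitely generated (discrete) abelian group by a finitely generated
`ℤ_p`-module with its p-adic (compact) topology is a locally compact abelian
group of finite ranks: `Hom(ℝ, A)` and `Hom(A, ℝ)` are finite-dimensional
real vector spaces, and multiplication by every prime `ℓ` on `A` is a strict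
morphism with finite kernel and finite cokernel.
-/

section

variable {A B : Type} [AddCommGroup A] [TopologicalSpace A] [IsTopologicalAddGroup A]
  [AddCommGroup B] [TopologicalSpace B] [IsTopologicalAddGroup B]

/-- The canonical morphism `Coim(f) = A/Ker(f) → Im(f) = cl(f(A))`. -/
noncomputable def coimToIm (f : ContinuousAddMonoidHom A B) :
    (A ⧸ f.toAddMonoidHom.ker) →+ f.toAddMonoidHom.range.topologicalClosure :=
  AddMonoidHom.codRestrict
    (QuotientAddGroup.lift _ f.toAddMonoidHom (fun _ hx => hx)) _ (by
      intro x
      induction x using QuotientAddGroup.induction_on with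
      | H a => exact AddSubgroup.le_topologicalClosure _ ⟨a, rfl⟩)

/-- A morphism of locally compact abelian groups is strict if the canonical
map `Coim(f) → Im(f)` is an isomorphism of topological groups. -/
noncomputable def IsStrict (f : ContinuousAddMonoidHom A B) : Prop :=
  IsHomeomorph (coimToIm f)

/-- Multiplication by a natural number `ℓ`, as a continuous endomorphism. -/
def mulByHom (ℓ : ℕ) : ContinuousAddMonoidHom A A :=
  ⟨ℓ • AddMonoidHom.id A, by
    show Continuous fun a : A => ℓ • a
    exact continuous_nsmul ℓ⟩

end

open Function Set

section auxlemmas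

theorem aux_finite_of_ker_range {G H : Type*} [AddGroup G] [AddGroup H] (f : G →+ H)
    (h1 : Finite f.ker) (h2 : Finite f.range) : Finite G := by
  have h3 : Finite (G ⧸ f.ker) :=
    Finite.of_equiv _ (QuotientAddGroup.quotientKerEquivRange f).toEquiv.symm
  exact Finite.of_equiv _ (AddSubgroup.addGroupEquivQuotientProdAddSubgroup (s := f.ker)).symm

theorem aux_red {R N : Type*} [CommRing R] [AddCommGroup N] [Module R N]
    [Module.Finite R N] {ℓ : ℕ} (hℓ : 0 < ℓ)
    (hred : ∀ c : R, ∃ (m : ℕ) (d : R), c = (m : R) + (ℓ : R) * d) :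
    ∃ (n : ℕ) (s : Fin n → N), ∀ x : N, ∃ (m : Fin n → Fin ℓ) (y : N),
      x = (∑ i, (m i : ℕ) • s i) + ℓ • y := by
  obtain ⟨n, s, hs⟩ := Module.Finite.exists_fin (R := R) (M := N)
  refine ⟨n, s, fun x => ?_⟩
  have hx : x ∈ Submodule.span R (Set.range s) := hs ▸ Submodule.mem_top
  obtain ⟨c, rfl⟩ := (Submodule.mem_span_range_iff_exists_fun R).mp hx
  choose m d hmd using fun i => hred (c i)
  refine ⟨fun i => ⟨m i % ℓ, Nat.mod_lt _ hℓ⟩,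
    (∑ i, (m i / ℓ) • s i) + ∑ i, d i • s i, ?_⟩
  have key : ∀ i, c i • s i
      = ((m i % ℓ) • s i) + ℓ • ((m i / ℓ) • s i + d i • s i) := by
    intro i
    rw [hmd i, add_smul]
    have h1 : ((m i : ℕ) : R) • s i = (m i) • s i := Nat.cast_smul_eq_nsmul R _ _
    have h2 : ((ℓ : R) * d i) • s i = ℓ • (d i • s i) := by
      rw [mul_smul, Nat.cast_smul_eq_nsmul]
    have h3 : (m i) • s i = (m i % ℓ) • s i + ℓ • ((m i / ℓ) • s i) := by
      conv_lhs => rw [← Nat.mod_add_div' (m i) ℓ]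
      rw [add_nsmul, mul_nsmul]
    rw [h1, h2, h3, smul_add]
    abel
  calc ∑ i, c i • s i
      = ∑ i, (((m i % ℓ) • s i) + ℓ • ((m i / ℓ) • s i + d i • s i)) := by
        exact Finset.sum_congr rfl fun i _ => key i
    _ = (∑ i, (m i % ℓ) • s i) + ℓ • ((∑ i, (m i / ℓ) • s i) + ∑ i, d i • s i) := by
        rw [Finset.sum_add_distrib, ← Finset.smul_sum, ← Finset.sum_add_distrib]

theorem aux_finite_of_torsion {R N : Type*} [CommRing R] [AddCommGroup N] [Module R N]
    [Module.Finite R N] {ℓ : ℕ} (hℓ : 0 < ℓ)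
    (hred : ∀ c : R, ∃ (m : ℕ) (d : R), c = (m : R) + (ℓ : R) * d)
    (hN : ∀ x : N, ℓ • x = 0) : Finite N := by
  obtain ⟨n, s, h⟩ := aux_red (R := R) (N := N) hℓ hred
  have hsur : Surjective (fun m : Fin n → Fin ℓ => ∑ i, (m i : ℕ) • s i) := by
    intro x
    obtain ⟨m, y, hxy⟩ := h x
    exact ⟨m, by rw [hxy, hN y, add_zero]⟩
  exact Finite.of_surjective _ hsur

theorem aux_finite_quot {R N : Type*} [CommRing R] [AddCommGroup N] [Module R N]
    [Module.Finite R N] {ℓ : ℕ} (hℓ : 0 < ℓ)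
    (hred : ∀ c : R, ∃ (m : ℕ) (d : R), c = (m : R) + (ℓ : R) * d)
    (S : AddSubgroup N) (hS : ∀ y : N, ℓ • y ∈ S) : Finite (N ⧸ S) := by
  obtain ⟨n, s, h⟩ := aux_red (R := R) (N := N) hℓ hred
  have hsur : Surjective (fun m : Fin n → Fin ℓ =>
      (QuotientAddGroup.mk (∑ i, (m i : ℕ) • s i) : N ⧸ S)) := by
    intro q
    induction q using QuotientAddGroup.induction_on with
    | H x =>
      obtain ⟨m, y, hxy⟩ := h x
      refine ⟨m, ?_⟩
      have : (∑ i, (m i : ℕ) • s i) - x ∈ S := by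
        rw [hxy]; simpa using S.neg_mem (hS y)
      exact (QuotientAddGroup.eq_iff_sub_mem.mpr this).symm ▸ rfl
  exact Finite.of_surjective _ hsur

theorem aux_red_int {ℓ : ℕ} (hℓ : 0 < ℓ) :
    ∀ c : ℤ, ∃ (m : ℕ) (d : ℤ), c = (m : ℤ) + (ℓ : ℤ) * d := by
  intro c
  have h0 : (0:ℤ) < ℓ := by exact_mod_cast hℓ
  refine ⟨(c % ℓ).toNat, c / ℓ, ?_⟩
  rw [Int.toNat_of_nonneg (Int.emod_nonneg c (ne_of_gt h0))]
  exact (Int.emod_add_mul_ediv c ℓ).symm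

theorem aux_red_padic (p : ℕ) [Fact p.Prime] {ℓ : ℕ} (hℓ : ℓ.Prime) :
    ∀ c : ℤ_[p], ∃ (m : ℕ) (d : ℤ_[p]), c = (m : ℤ_[p]) + (ℓ : ℤ_[p]) * d := by
  intro c
  by_cases h : ℓ = p
  · subst h
    have hsp := PadicInt.appr_spec 1 c
    rw [pow_one, Ideal.mem_span_singleton] at hsp
    obtain ⟨d, hd⟩ := hsp
    exact ⟨c.appr 1, d, by rw [← hd]; ring⟩
  · have hu : IsUnit (ℓ : ℤ_[p]) := by
      by_contra hnu
      have hmem : (ℓ : ℤ_[p]) ∈ IsLocalRing.maximalIdeal ℤ_[p] := hnu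
      rw [PadicInt.maximalIdeal_eq_span_p, Ideal.mem_span_singleton] at hmem
      obtain ⟨d, hd⟩ := hmem
      have hcop : Nat.Coprime ℓ p := (Nat.coprime_primes hℓ (Fact.out)).mpr h
      obtain ⟨a, b, hab⟩ : ∃ a b : ℤ, a * ℓ + b * p = 1 := by
        exact ⟨Nat.gcdA ℓ p, Nat.gcdB ℓ p, by
          have := Nat.gcd_eq_gcd_ab ℓ p
          rw [Nat.Coprime.gcd_eq_one hcop] at this
          push_cast at this ⊢
          linarith⟩
      have : IsUnit (p : ℤ_[p]) := by
        have h1 : (1 : ℤ_[p]) = (p : ℤ_[p]) * ((a : ℤ_[p]) * d + (b : ℤ_[p])) := by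
          have h2 : ((a : ℤ_[p]) * ℓ + (b : ℤ_[p]) * p) = 1 := by
            exact_mod_cast congrArg (fun z : ℤ => (z : ℤ_[p])) hab
          rw [← h2, hd]; ring
        exact isUnit_iff_exists_inv.mpr ⟨_, h1.symm⟩
      have hp1 : ‖(p : ℤ_[p])‖ = 1 := PadicInt.isUnit_iff.mp this
      rw [PadicInt.norm_p] at hp1
      have hp2 : (1:ℝ) < p := by exact_mod_cast (Fact.out : p.Prime).one_lt
      have : (p:ℝ)⁻¹ < 1 := inv_lt_one_of_one_lt₀ hp2
      rw [hp1] at this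
      exact lt_irrefl _ this
    obtain ⟨u, hu⟩ := hu
    exact ⟨0, (↑u⁻¹ : ℤ_[p]) * c, by
      rw [Nat.cast_zero, zero_add, ← hu, ← mul_assoc, Units.mul_inv, one_mul]⟩

end auxlemmas

theorem extension_has_finite_ranks
    (p : ℕ) [Fact p.Prime]
    -- `A`, a locally compact abelian group
    (A : Type) [AddCommGroup A] [TopologicalSpace A] [IsTopologicalAddGroup A]
    [LocallyCompactSpace A] [T2Space A]
    -- `M`, a finitely generated `ℤ_p`-module with its p-adic (compact) topology
    (M : Type) [AddCommGroup M] [TopologicalSpace M] [IsTopologicalAddGroup M]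
    [Module ℤ_[p] M] [Module.Finite ℤ_[p] M] [ContinuousSMul ℤ_[p] M]
    [CompactSpace M] [T2Space M]
    -- `F`, a finitely generated discrete abelian group
    (F : Type) [AddCommGroup F] [TopologicalSpace F] [IsTopologicalAddGroup F]
    [DiscreteTopology F] [AddGroup.FG F]
    -- `A` is an extension of `F` by `M`
    (ι : ContinuousAddMonoidHom M A) (hι : Topology.IsClosedEmbedding ι)
    (π : ContinuousAddMonoidHom A F) (hπ : Function.Surjective π)
    (hq : Topology.IsQuotientMap ⇑π)
    (hex : π.toAddMonoidHom.ker = ι.toAddMonoidHom.range) :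
    -- `Hom(ℝ, A)` is a finite-dimensional real vector space (scalar action by
    -- precomposition with multiplication on ℝ)
    (∃ (n : ℕ) (v : Fin n → ContinuousAddMonoidHom ℝ A),
      ∀ f : ContinuousAddMonoidHom ℝ A, ∃ c : Fin n → ℝ,
        ∀ x, f x = ∑ i, v i (c i * x)) ∧
    -- `Hom(A, ℝ)` is a finite-dimensional real vector space (pointwise action)
    (∃ (n : ℕ) (v : Fin n → ContinuousAddMonoidHom A ℝ),
      ∀ f : ContinuousAddMonoidHom A ℝ, ∃ c : Fin n → ℝ,
        ∀ a, f a = ∑ i, c i * v i a) ∧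
    -- multiplication by each prime `ℓ` is strict with finite kernel and cokernel
    (∀ ℓ : ℕ, ℓ.Prime →
      IsStrict (mulByHom (A := A) ℓ) ∧
      Finite ((mulByHom (A := A) ℓ).toAddMonoidHom.ker) ∧
      Finite (A ⧸ ((mulByHom (A := A) ℓ).toAddMonoidHom.range.topologicalClosure))) := by
  classical
  have hπc : Continuous ⇑π := map_continuous π
  have hιc : Continuous ⇑ι := map_continuous ι
  have hιinj : Function.Injective ⇑ι := hι.injective
  have hker_set : (π.toAddMonoidHom.ker : Set A) = ⇑π ⁻¹' {0} := by
    ext a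
    constructor
    · intro h; exact h
    · intro h; exact h
  have hrange_open : IsOpen ((ι.toAddMonoidHom.range : AddSubgroup A) : Set A) := by
    rw [← hex, hker_set]
    exact (isOpen_discrete _).preimage hπc
  have hrange_eq : ((ι.toAddMonoidHom.range : AddSubgroup A) : Set A) = Set.range ⇑ι :=
    AddMonoidHom.coe_range _
  have hrange_cpt : IsCompact ((ι.toAddMonoidHom.range : AddSubgroup A) : Set A) := by
    rw [hrange_eq]; exact isCompact_range hιc
  have hmem_range : ∀ a : A, π a = 0 → a ∈ ι.toAddMonoidHom.range := by
    intro a ha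
    rw [← hex]
    exact ha
  have hπι : ∀ m : M, π (ι m) = 0 := by
    intro m
    have : ι m ∈ π.toAddMonoidHom.ker := by
      rw [hex]; exact ⟨m, rfl⟩
    exact this
  refine ⟨?_, ?_, ?_⟩
  · -- Part 1 : Hom(ℝ, A) = 0
    refine ⟨0, Fin.elim0, fun f => ⟨Fin.elim0, fun x => ?_⟩⟩
    have hval : ∀ y : ℝ, f y ∈ ι.toAddMonoidHom.range := by
      intro y
      apply hmem_range
      have hlc : IsLocallyConstant (fun t : ℝ => π (f t)) :=
        (IsLocallyConstant.iff_continuous _).mpr (hπc.comp (map_continuous f))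
      have h0 := hlc.apply_eq_of_preconnectedSpace y 0
      simpa using h0
    choose g hg using hval
    have hg' : ∀ y : ℝ, ι (g y) = f y := hg
    have hKrull : (⨅ i : ℕ, (Ideal.span {(p : ℤ_[p])}) ^ i • (⊤ : Submodule ℤ_[p] M)) = ⊥ := by
      apply Ideal.iInf_pow_smul_eq_bot_of_isLocalRing
      rw [Ne, Ideal.span_singleton_eq_top]
      intro hunit
      have hp1 : ‖(p : ℤ_[p])‖ = 1 := PadicInt.isUnit_iff.mp hunit
      rw [PadicInt.norm_p] at hp1
      have hp2 : (1:ℝ) < p := by exact_mod_cast (Fact.out : p.Prime).one_lt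
      have : (p:ℝ)⁻¹ < 1 := inv_lt_one_of_one_lt₀ hp2
      rw [hp1] at this
      exact lt_irrefl _ this
    have hmem : g x ∈ (⨅ i : ℕ, (Ideal.span {(p : ℤ_[p])}) ^ i • (⊤ : Submodule ℤ_[p] M)) := by
      rw [Submodule.mem_iInf]
      intro k
      have hppos : ((p:ℝ) ^ k) ≠ 0 :=
        pow_ne_zero _ (Nat.cast_ne_zero.mpr (Fact.out : p.Prime).ne_zero)
      have hx : f x = (p ^ k) • f (x / p ^ k) := by
        rw [← map_nsmul]
        congr 1
        rw [nsmul_eq_mul]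
        push_cast
        field_simp
      have h2 : g x = (p ^ k) • g (x / p ^ k) := by
        apply hιinj
        rw [hg', map_nsmul, hg', ← hx]
      rw [h2]
      have hsm : (p ^ k) • g (x / p ^ k) = ((p : ℤ_[p]))^k • g (x / p ^ k) := by
        rw [← Nat.cast_smul_eq_nsmul ℤ_[p]]
        push_cast
        rfl
      rw [hsm]
      exact Submodule.smul_mem_smul
        (Ideal.pow_mem_pow (Ideal.mem_span_singleton_self _) k) Submodule.mem_top
    rw [hKrull] at hmem
    have hg0 : g x = 0 := hmem
    have : f x = 0 := by rw [← hg' x, hg0, map_zero]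
    simp [this]
  · -- Part 2 : Hom(A, ℝ) is finite-dimensional
    -- continuous homs kill the compact subgroup ι(M)
    have hcomp : ∀ (f : ContinuousAddMonoidHom A ℝ) (m : M), f (ι m) = 0 := by
      intro f m
      by_contra hne
      have hb := (isCompact_range ((map_continuous f).comp hιc)).isBounded
      obtain ⟨R0, hR0⟩ := isBounded_iff_forall_norm_le.mp hb
      have habs : 0 < |f (ι m)| := abs_pos.mpr hne
      obtain ⟨n, hn⟩ := exists_nat_gt (R0 / |f (ι m)|)
      have hmemn : (n : ℝ) * f (ι m) ∈ Set.range (⇑f ∘ ⇑ι) := by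
        refine ⟨n • m, ?_⟩
        simp only [Function.comp_apply, map_nsmul]
        rw [nsmul_eq_mul]
      have := hR0 _ hmemn
      rw [Real.norm_eq_abs, abs_mul, Nat.abs_cast] at this
      have hlt : R0 < (n:ℝ) * |f (ι m)| := by
        rw [div_lt_iff₀ habs] at hn
        exact hn
      linarith
    have hker0 : ∀ (f : ContinuousAddMonoidHom A ℝ) (b : A), π b = 0 → f b = 0 := by
      intro f b hb
      obtain ⟨m, rfl⟩ := hmem_range b hb
      exact hcomp f m
    -- generators of F
    obtain ⟨Sset, hSgen, hSfin⟩ := AddGroup.fg_iff.mp ‹AddGroup.FG F›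
    haveI := hSfin.fintype
    -- a section of π
    set σ : F → A := Function.surjInv hπ with hσdef
    have hσ : ∀ y : F, π (σ y) = y := fun y => Function.surjInv_eq hπ y
    -- each f factors through π
    have hfact : ∀ f : ContinuousAddMonoidHom A ℝ, ∃ g : F →+ ℝ,
        (∀ b : A, f b = g (π b)) := by
      intro f
      refine ⟨AddMonoidHom.mk' (fun y => f (σ y)) ?_, ?_⟩
      · intro y z
        have h0 : π (σ (y + z) - σ y - σ z) = 0 := by
          simp [map_sub, hσ]
        have := hker0 f _ h0
        simp only [map_sub] at this
        linarith
      · intro b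
        have h0 : π (b - σ (π b)) = 0 := by simp [map_sub, hσ]
        have := hker0 f _ h0
        simp only [map_sub] at this
        simp only [AddMonoidHom.mk'_apply]
        linarith
    have hkey : ∀ f : ContinuousAddMonoidHom A ℝ,
        (∀ s : Sset, f (σ (s : F)) = 0) → ∀ a, f a = 0 := by
      intro f hz a
      obtain ⟨g, hg⟩ := hfact f
      have hSsub : Sset ⊆ (g.ker : Set F) := by
        intro s hs
        have : g s = 0 := by
          have := hz ⟨s, hs⟩
          rw [hg (σ s), hσ] at this
          exact this
        exact this
      have hgtop : (⊤ : AddSubgroup F) ≤ g.ker := by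
        rw [← hSgen]
        exact (AddSubgroup.closure_le _).mpr hSsub
      have : g (π a) = 0 := hgtop (AddSubgroup.mem_top _)
      rw [hg a, this]
    -- the submodule of functions that are continuous homs
    have hsmulV : ∀ (r : ℝ) (f : ContinuousAddMonoidHom A ℝ),
        ∃ g : ContinuousAddMonoidHom A ℝ, ∀ a, g a = r * f a := by
      intro r f
      exact ⟨⟨AddMonoidHom.mk' (fun a => r * f a)
          (fun a b => by
            show r * f (a + b) = r * f a + r * f b
            rw [map_add, mul_add]),
        (continuous_const.mul (map_continuous f))⟩, fun a => rfl⟩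
    let W : Submodule ℝ (A → ℝ) :=
      { carrier := Set.range (fun f : ContinuousAddMonoidHom A ℝ => ⇑f)
        add_mem' := by
          rintro _ _ ⟨f, rfl⟩ ⟨g, rfl⟩
          exact ⟨f + g, rfl⟩
        zero_mem' := ⟨0, rfl⟩
        smul_mem' := by
          rintro r _ ⟨f, rfl⟩
          obtain ⟨g, hgr⟩ := hsmulV r f
          exact ⟨g, by ext a; simp [hgr a]⟩ }
    let E : W →ₗ[ℝ] (Sset → ℝ) :=
      LinearMap.pi (fun s => (LinearMap.proj (σ (s : F))).comp W.subtype)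
    have hEinj : Function.Injective E := by
      intro w w' hww
      obtain ⟨fw, hfw⟩ := w.2
      obtain ⟨fw', hfw'⟩ := w'.2
      have hdiff : ∀ s : Sset, (fw - fw') (σ (s : F)) = 0 := by
        intro s
        have := congrFun hww s
        simp only [E, LinearMap.pi_apply, LinearMap.comp_apply, LinearMap.proj_apply,
          Submodule.subtype_apply] at this
        have h1 : fw (σ (s : F)) = (w : A → ℝ) (σ (s : F)) := by rw [← hfw]
        have h2 : fw' (σ (s : F)) = (w' : A → ℝ) (σ (s : F)) := by rw [← hfw']
        show fw (σ (s : F)) - fw' (σ (s : F)) = 0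
        rw [h1, h2, this, sub_self]
      have hzero := hkey (fw - fw') hdiff
      apply Subtype.ext
      funext a
      have := hzero a
      show (w : A → ℝ) a = (w' : A → ℝ) a
      rw [← hfw, ← hfw']
      have : fw a - fw' a = 0 := this
      linarith
    haveI : FiniteDimensional ℝ W := FiniteDimensional.of_injective E hEinj
    let b := Module.finBasis ℝ W
    set n := Module.finrank ℝ W with hn
    have hvex : ∀ i : Fin n, ∃ f : ContinuousAddMonoidHom A ℝ, ⇑f = ((b i : W) : A → ℝ) :=
      fun i => (b i).2
    choose v hv using hvex
    refine ⟨n, v, fun f => ?_⟩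
    have hfW : ⇑f ∈ W := ⟨f, rfl⟩
    set w : W := ⟨⇑f, hfW⟩ with hw
    refine ⟨fun i => b.repr w i, fun a => ?_⟩
    have hrepr : ∑ i, b.repr w i • b i = w := b.sum_repr w
    have h1 : W.subtype w = ∑ i, b.repr w i • W.subtype (b i) := by
      conv_lhs => rw [← hrepr]
      rw [map_sum]
      exact Finset.sum_congr rfl fun i _ => by rw [LinearMap.map_smul]
    have h2 := congrFun h1 a
    show f a = ∑ i, b.repr w i * v i a
    calc f a = W.subtype w a := rfl
      _ = (∑ i, b.repr w i • W.subtype (b i)) a := h2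
      _ = ∑ i, b.repr w i * v i a := by
          rw [Finset.sum_apply]
          refine Finset.sum_congr rfl fun i _ => ?_
          rw [Pi.smul_apply, smul_eq_mul, hv i]
          rfl
  · -- Part 3 : multiplication by ℓ
    intro ℓ hℓp
    have hℓ0 : 0 < ℓ := hℓp.pos
    have hredZp := aux_red_padic p (ℓ := ℓ) hℓp
    have hredZ := aux_red_int (ℓ := ℓ) hℓ0
    haveI hFfin : Module.Finite ℤ F := Module.Finite.iff_addGroup_fg.mpr ‹_›
    haveI : IsNoetherian ℤ_[p] M := isNoetherian_of_isNoetherianRing_of_finite ℤ_[p] M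
    haveI : IsNoetherian ℤ F := isNoetherian_of_isNoetherianRing_of_finite ℤ F
    -- the subgroup of ℓ-multiples in M
    set SM : AddSubgroup M := (ℓ • AddMonoidHom.id M).range with hSMdef
    have hSMmem : ∀ y : M, ℓ • y ∈ SM := fun y => ⟨y, rfl⟩
    have hMquot : Finite (M ⧸ SM) := aux_finite_quot (R := ℤ_[p]) hℓ0 hredZp SM hSMmem
    -- torsion finiteness
    have hMker : Finite (Submodule.torsionBy ℤ_[p] M (ℓ : ℤ_[p])) := by
      haveI : Module.Finite ℤ_[p] (Submodule.torsionBy ℤ_[p] M (ℓ : ℤ_[p])) :=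
        Module.Finite.iff_fg.mpr (IsNoetherian.noetherian _)
      refine aux_finite_of_torsion (R := ℤ_[p]) hℓ0 hredZp ?_
      rintro ⟨x, hx⟩
      have hx' : (ℓ : ℤ_[p]) • x = 0 := hx
      apply Subtype.ext
      show ℓ • x = 0
      rw [← Nat.cast_smul_eq_nsmul ℤ_[p], hx']
    have hFker : Finite (Submodule.torsionBy ℤ F (ℓ : ℤ)) := by
      haveI : Module.Finite ℤ (Submodule.torsionBy ℤ F (ℓ : ℤ)) :=
        Module.Finite.iff_fg.mpr (IsNoetherian.noetherian _)
      refine aux_finite_of_torsion (R := ℤ) hℓ0 hredZ ?_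
      rintro ⟨x, hx⟩
      have hx' : (ℓ : ℤ) • x = 0 := hx
      apply Subtype.ext
      show ℓ • x = 0
      rw [← Nat.cast_smul_eq_nsmul ℤ, hx']
    -- the subgroup of ℓ-multiples in F
    set SF : AddSubgroup F := (ℓ • AddMonoidHom.id F).range with hSFdef
    have hSFmem : ∀ y : F, ℓ • y ∈ SF := fun y => ⟨y, rfl⟩
    have hFquot : Finite (F ⧸ SF) := aux_finite_quot (R := ℤ) hℓ0 hredZ SF hSFmem
    -- notation for the map on A
    set φ := mulByHom (A := A) ℓ with hφdef
    have hφa : ∀ a : A, φ a = ℓ • a := fun a => rfl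
    -- kernel of mul-ℓ on A is finite
    have hkerfin : Finite ((mulByHom (A := A) ℓ).toAddMonoidHom.ker) := by
      set Kℓ := (mulByHom (A := A) ℓ).toAddMonoidHom.ker with hKℓdef
      let j : Kℓ →+ F := π.toAddMonoidHom.comp Kℓ.subtype
      have hja : ∀ x : Kℓ, j x = π (x : A) := fun x => rfl
      have hkj : Finite j.ker := by
        have hmem : ∀ x : j.ker, ((x : Kℓ) : A) ∈ ι.toAddMonoidHom.range := by
          intro x
          apply hmem_range
          exact x.2
        choose m hm using hmem
        have hm' : ∀ x : j.ker, ι (m x) = ((x : Kℓ) : A) := hm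
        have hminj : Function.Injective m := by
          intro x y hxy
          apply Subtype.ext
          apply Subtype.ext
          rw [← hm x, ← hm y, hxy]
        have htor : ∀ x, m x ∈ Submodule.torsionBy ℤ_[p] M (ℓ : ℤ_[p]) := by
          intro x
          rw [Submodule.mem_torsionBy_iff]
          have h2 : ℓ • (((x : j.ker) : Kℓ) : A) = 0 := (x : j.ker).1.2
          have h1 : ι (ℓ • m x) = 0 := by
            rw [map_nsmul, hm' x, h2]
          have : ℓ • m x = 0 := hιinj (by rw [h1, map_zero])
          rw [Nat.cast_smul_eq_nsmul, this]
        haveI := hMker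
        exact Finite.of_injective
          (fun x => (⟨m x, htor x⟩ : Submodule.torsionBy ℤ_[p] M (ℓ : ℤ_[p])))
          (fun x y hxy => hminj (by simpa using hxy))
      have hrj : Finite j.range := by
        have htor : ∀ y : j.range, (y : F) ∈ Submodule.torsionBy ℤ F (ℓ : ℤ) := by
          rintro ⟨y, x, rfl⟩
          rw [Submodule.mem_torsionBy_iff]
          have h2 : ℓ • ((x : Kℓ) : A) = 0 := x.2
          have : ℓ • (j x) = 0 := by
            rw [hja, ← map_nsmul, h2, map_zero]
          rw [natCast_zsmul, this]
        haveI := hFker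
        exact Finite.of_injective
          (fun y => (⟨(y : F), htor y⟩ : Submodule.torsionBy ℤ F (ℓ : ℤ)))
          (fun x y hxy => Subtype.ext (by simpa using hxy))
      exact aux_finite_of_ker_range j hkj hrj
    -- the range subgroup and its topology
    set Sgrp := (mulByHom (A := A) ℓ).toAddMonoidHom.range with hSgrpdef
    have hSgrpmem : ∀ a : A, ℓ • a ∈ Sgrp := fun a => ⟨a, rfl⟩
    -- ι(SM) is open in A
    have hSMcpt : IsCompact (SM : Set M) := by
      have : (SM : Set M) = Set.range (fun m : M => ℓ • m) := by
        ext x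
        constructor
        · rintro ⟨y, rfl⟩
          exact ⟨y, rfl⟩
        · rintro ⟨y, rfl⟩
          exact ⟨y, rfl⟩
      rw [this]
      exact isCompact_range (continuous_nsmul ℓ)
    have hSMclosed : IsClosed (SM : Set M) := hSMcpt.isClosed
    haveI : SM.FiniteIndex := @AddSubgroup.finiteIndex_of_finite_quotient M _ SM hMquot
    have hSMopen : IsOpen (SM : Set M) :=
      AddSubgroup.isOpen_of_isClosed_of_finiteIndex SM hSMclosed
    have hιopenmap : IsOpenMap ⇑ι := by
      have : Topology.IsOpenEmbedding ⇑ι := ⟨hι.toIsEmbedding, by rw [← hrange_eq]; exact hrange_open⟩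
      exact this.isOpenMap
    have hUopen : IsOpen ((SM.map ι.toAddMonoidHom : AddSubgroup A) : Set A) := by
      rw [AddSubgroup.coe_map]
      exact hιopenmap _ hSMopen
    have hUle : SM.map ι.toAddMonoidHom ≤ Sgrp := by
      rintro _ ⟨m, ⟨m', rfl⟩, rfl⟩
      refine ⟨ι m', ?_⟩
      show ℓ • ι m' = ι (ℓ • m')
      rw [map_nsmul]
    have hSgrpopen : IsOpen (Sgrp : Set A) := AddSubgroup.isOpen_mono hUle hUopen
    have hSgrpclosed : IsClosed (Sgrp : Set A) := Sgrp.isClosed_of_isOpen hSgrpopen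
    have hSc : Sgrp.topologicalClosure = Sgrp := by
      apply SetLike.ext'
      rw [AddSubgroup.topologicalClosure_coe]
      exact hSgrpclosed.closure_eq
    -- cokernel finiteness
    have hcoker : Finite (A ⧸ Sgrp) := by
      have hle : Sgrp ≤ SF.comap π.toAddMonoidHom := by
        rintro _ ⟨a, rfl⟩
        rw [AddSubgroup.mem_comap]
        have hmm : π.toAddMonoidHom ((mulByHom (A := A) ℓ).toAddMonoidHom a) = ℓ • π a := by
          show π (ℓ • a) = ℓ • π a
          rw [map_nsmul]
        rw [hmm]
        exact hSFmem (π a)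
      set πbar : (A ⧸ Sgrp) →+ (F ⧸ SF) :=
        QuotientAddGroup.map Sgrp SF π.toAddMonoidHom hle with hπbardef
      set g : M →+ (A ⧸ Sgrp) := (QuotientAddGroup.mk' Sgrp).comp ι.toAddMonoidHom with hgdef
      have hgSM : ∀ m ∈ SM, g m = 0 := by
        rintro _ ⟨m', rfl⟩
        have h1 : g ((ℓ • AddMonoidHom.id M) m') = QuotientAddGroup.mk (ι (ℓ • m')) := rfl
        rw [h1, map_nsmul]
        exact (QuotientAddGroup.eq_zero_iff _).mpr (hSgrpmem _)
      set gbar : (M ⧸ SM) →+ (A ⧸ Sgrp) :=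
        QuotientAddGroup.lift SM g (fun m hm => hgSM m hm) with hgbardef
      have hπg : ∀ q : M ⧸ SM, πbar (gbar q) = 0 := by
        intro q
        induction q using QuotientAddGroup.induction_on with
        | H m =>
          have h1 : πbar (gbar (QuotientAddGroup.mk m)) = QuotientAddGroup.mk (π (ι m)) := rfl
          rw [h1, hπι m]
          rfl
      have hkerπbar : ∀ x : (A ⧸ Sgrp), πbar x = 0 → ∃ q : M ⧸ SM, gbar q = x := by
        intro x hx
        induction x using QuotientAddGroup.induction_on with
        | H a =>
          have h1 : QuotientAddGroup.mk (π a) = (0 : F ⧸ SF) := hx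
          rw [QuotientAddGroup.eq_zero_iff] at h1
          obtain ⟨y, hy⟩ := h1
          have hy' : ℓ • y = π a := hy
          obtain ⟨b, hb⟩ := hπ y
          have hπ0 : π (a - ℓ • b) = 0 := by
            rw [map_sub, map_nsmul, hb, hy', sub_self]
          obtain ⟨m, hm⟩ := hmem_range _ hπ0
          refine ⟨QuotientAddGroup.mk m, ?_⟩
          have h2 : gbar (QuotientAddGroup.mk m) =
              QuotientAddGroup.mk (ι.toAddMonoidHom m) := rfl
          rw [h2, hm, QuotientAddGroup.eq_iff_sub_mem]
          have h3 : a - ℓ • b - a = -(ℓ • b) := by abel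
          rw [h3]
          exact Sgrp.neg_mem (hSgrpmem b)
      have hkerfinπ : Finite πbar.ker := by
        refine Finite.of_surjective
          (fun q : M ⧸ SM => (⟨gbar q, hπg q⟩ : πbar.ker)) ?_
        rintro ⟨x, hx⟩
        obtain ⟨q, hq⟩ := hkerπbar x hx
        exact ⟨q, Subtype.ext hq⟩
      haveI := hFquot
      exact aux_finite_of_ker_range πbar hkerfinπ inferInstance
    -- sigma-compactness of A
    have hFcount : Countable F := by
      obtain ⟨n0, s0, hs0⟩ := Module.Finite.exists_fin (R := ℤ) (M := F)
      have hsur : Surjective (fun c : Fin n0 → ℤ => ∑ i, c i • s0 i) := by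
        intro x
        have hx : x ∈ Submodule.span ℤ (Set.range s0) := hs0 ▸ Submodule.mem_top
        obtain ⟨c, hc⟩ := (Submodule.mem_span_range_iff_exists_fun ℤ).mp hx
        exact ⟨c, hc⟩
      exact hsur.countable
    haveI := hFcount
    haveI : SigmaCompactSpace A := by
      choose sec hsec using hπ
      obtain ⟨u, hu⟩ := exists_surjective_nat F
      refine ⟨fun n => (fun x => sec (u n) + x) ''
        ((ι.toAddMonoidHom.range : AddSubgroup A) : Set A), fun n => ?_, ?_⟩
      · exact hrange_cpt.image (continuous_add_left _)
      · apply Set.eq_univ_of_forall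
        intro a
        obtain ⟨n, hn⟩ := hu (π a)
        refine Set.mem_iUnion.mpr ⟨n, ⟨a - sec (u n), ?_, by
          show sec (u n) + (a - sec (u n)) = a
          rw [add_comm, sub_add_cancel]⟩⟩
        apply hmem_range
        rw [map_sub, hsec, hn, sub_self]
    -- strictness
    have hstrict : IsStrict (mulByHom (A := A) ℓ) := by
      show IsHomeomorph (coimToIm (mulByHom (A := A) ℓ))
      set Sc := (mulByHom (A := A) ℓ).toAddMonoidHom.range.topologicalClosure with hScdef
      have hScclosed : IsClosed (Sc : Set A) := AddSubgroup.isClosed_topologicalClosure _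
      haveI : LocallyCompactSpace Sc := hScclosed.locallyCompactSpace
      set ρ : A →+ Sc := (mulByHom (A := A) ℓ).toAddMonoidHom.codRestrict Sc
        (fun a => Sgrp.le_topologicalClosure ⟨a, rfl⟩) with hρdef
      have hρa : ∀ a : A, (ρ a : A) = ℓ • a := fun a => rfl
      have hρc : Continuous ⇑ρ := Continuous.subtype_mk (continuous_nsmul ℓ) _
      have hρsurj : Surjective ⇑ρ := by
        rintro ⟨b, hb⟩
        have hb' : b ∈ Sgrp := by
          rw [← hSc]
          exact hb
        obtain ⟨a, ha⟩ := hb'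
        exact ⟨a, Subtype.ext ha⟩
      have hρopen : IsOpenMap ⇑ρ := AddMonoidHom.isOpenMap_of_sigmaCompact ρ hρsurj hρc
      have hcomm : ∀ a : A, coimToIm (mulByHom (A := A) ℓ) (QuotientAddGroup.mk a) = ρ a :=
        fun a => rfl
      refine ⟨?_, ?_, ?_, ?_⟩
      · rw [(QuotientAddGroup.isOpenQuotientMap_mk).isQuotientMap.continuous_iff]
        have heq : (⇑(coimToIm (mulByHom (A := A) ℓ)) ∘ QuotientAddGroup.mk) = ⇑ρ :=
          funext hcomm
        rw [heq]
        exact hρc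
      · intro U hU
        have himg : ⇑(coimToIm (mulByHom (A := A) ℓ)) '' U
            = ⇑ρ '' (QuotientAddGroup.mk ⁻¹' U) := by
          ext x
          constructor
          · rintro ⟨q, hq, rfl⟩
            induction q using QuotientAddGroup.induction_on with
            | H a => exact ⟨a, hq, (hcomm a).symm⟩
          · rintro ⟨a, ha, rfl⟩
            exact ⟨QuotientAddGroup.mk a, ha, hcomm a⟩
        rw [himg]
        exact hρopen _ (hU.preimage (QuotientAddGroup.isOpenQuotientMap_mk).continuous)
      · intro q q' hqq
        induction q using QuotientAddGroup.induction_on with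
        | H a =>
          induction q' using QuotientAddGroup.induction_on with
          | H a' =>
            rw [hcomm a, hcomm a'] at hqq
            have hval : ℓ • a = ℓ • a' := by
              have := congrArg Subtype.val hqq
              rwa [hρa, hρa] at this
            apply (QuotientAddGroup.eq_iff_sub_mem).mpr
            show (mulByHom (A := A) ℓ).toAddMonoidHom (a - a') = 0
            have : ℓ • (a - a') = 0 := by rw [smul_sub, hval, sub_self]
            exact this
      · intro y
        obtain ⟨a, ha⟩ := hρsurj y
        exact ⟨QuotientAddGroup.mk a, by rw [hcomm a, ha]⟩
    refine ⟨hstrict, hkerfin, ?_⟩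
    rw [hSc]
    exact hcoker
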